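/- arXiv:2207.06133 — 3 statements merged into one kernel-verified Lean document; each statement's English description precedes it below -/
import Mathlib

section
/- Let H and K be complex Hilbert spaces, S : H → K a bounded linear operator with Hilbert adjoint S* : K → H, and let δ > 0, ε > 0, E ≥ 0 and α > 0. Suppose φ*, φ_δ ∈ H and u_δ, h ∈ K satisfy: (i) φ_δ minimizes the Tikhonov functional J_α(φ) = ‖Sφ − u_δ‖² + α‖φ‖² over H; (ii) ‖S φ_δ − u_δ‖ = δ + ε (discrepancy principle); (iii) ‖S φ* − u_δ‖ ≤ δ + ε; (iv) ‖φ* − S* h‖ ≤ ε; (v) ‖h‖ ≤ E. Then ‖φ_δ − φ*‖ ≤ 2ε + 2√((δ + ε)·E). (Abstract Hilbert-space form of Theorem 3.2(b).) -/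
open scoped ComplexInnerProductSpace


/-- Abstract Hilbert-space form of Theorem 3.2(b): error estimate for the Tikhonov
regularized solution under the Morozov discrepancy principle. -/
theorem stmt_0
    {H K : Type*} [NormedAddCommGroup H] [InnerProductSpace ℂ H] [CompleteSpace H]
    [NormedAddCommGroup K] [InnerProductSpace ℂ K] [CompleteSpace K]
    (S : H →L[ℂ] K) (δ ε E α : ℝ) (hδ : 0 < δ) (hε : 0 < ε) (hE : 0 ≤ E) (hα : 0 < α)
    (φs φδ : H) (uδ h : K)
    (hmin : ∀ ψ : H, ‖S φδ - uδ‖ ^ 2 + α * ‖φδ‖ ^ 2 ≤ ‖S ψ - uδ‖ ^ 2 + α * ‖ψ‖ ^ 2)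
    (hdisc : ‖S φδ - uδ‖ = δ + ε)
    (hφs : ‖S φs - uδ‖ ≤ δ + ε)
    (happrox : ‖φs - (ContinuousLinearMap.adjoint S) h‖ ≤ ε)
    (hh : ‖h‖ ≤ E) :
    ‖φδ - φs‖ ≤ 2 * ε + 2 * Real.sqrt ((δ + ε) * E) := by
  have hkey := hmin φs
  rw [hdisc] at hkey
  have h1 : ‖S φs - uδ‖ ^ 2 ≤ (δ + ε) ^ 2 :=
    pow_le_pow_left₀ (norm_nonneg _) hφs 2
  have hnorm : ‖φδ‖ ≤ ‖φs‖ := by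
    have h2 : ‖φδ‖ ^ 2 ≤ ‖φs‖ ^ 2 := by nlinarith
    nlinarith [norm_nonneg φδ, norm_nonneg φs]
  -- expand the norm square
  have hexp : ‖φδ - φs‖ ^ 2 =
      ‖φδ‖ ^ 2 - 2 * Complex.re ⟪φδ, φs⟫ + ‖φs‖ ^ 2 :=
    @norm_sub_sq ℂ _ _ _ _ φδ φs
  have hsplit : ⟪φs - φδ, φs⟫
      = ⟪φs - φδ, φs - (ContinuousLinearMap.adjoint S) h⟫
        + ⟪S (φs - φδ), h⟫ := by
    rw [← ContinuousLinearMap.adjoint_inner_right, ← inner_add_right]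
    congr 1
    abel
  have hre1 : Complex.re ⟪φs - φδ, φs - (ContinuousLinearMap.adjoint S) h⟫
      ≤ ‖φs - φδ‖ * ε := by
    calc Complex.re ⟪φs - φδ, φs - (ContinuousLinearMap.adjoint S) h⟫
        ≤ ‖⟪φs - φδ, φs - (ContinuousLinearMap.adjoint S) h⟫‖ :=
          Complex.re_le_norm _
      _ ≤ ‖φs - φδ‖ * ‖φs - (ContinuousLinearMap.adjoint S) h‖ :=
          norm_inner_le_norm _ _
      _ ≤ ‖φs - φδ‖ * ε := by
          exact mul_le_mul_of_nonneg_left happrox (norm_nonneg _)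
  have hSdiff : ‖S (φs - φδ)‖ ≤ 2 * (δ + ε) := by
    have : S (φs - φδ) = (S φs - uδ) - (S φδ - uδ) := by
      rw [map_sub]; abel
    rw [this]
    calc ‖(S φs - uδ) - (S φδ - uδ)‖ ≤ ‖S φs - uδ‖ + ‖S φδ - uδ‖ :=
          norm_sub_le _ _
      _ ≤ 2 * (δ + ε) := by rw [hdisc]; linarith
  have hre2 : Complex.re ⟪S (φs - φδ), h⟫ ≤ 2 * (δ + ε) * E := by
    calc Complex.re ⟪S (φs - φδ), h⟫ ≤ ‖⟪S (φs - φδ), h⟫‖ :=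
          Complex.re_le_norm _
      _ ≤ ‖S (φs - φδ)‖ * ‖h‖ := norm_inner_le_norm _ _
      _ ≤ (2 * (δ + ε)) * E := by
          apply mul_le_mul hSdiff hh (norm_nonneg _)
          positivity
      _ = 2 * (δ + ε) * E := by ring
  have hre : Complex.re ⟪φs - φδ, φs⟫
      = Complex.re ⟪φs, φs⟫ - Complex.re ⟪φδ, φs⟫ := by
    rw [inner_sub_left]; simp
  have hself : Complex.re ⟪φs, φs⟫ = ‖φs‖ ^ 2 := by
    rw [← inner_self_eq_norm_sq (𝕜 := ℂ)]; rfl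
  have hrev : ‖φs - φδ‖ = ‖φδ - φs‖ := norm_sub_rev _ _
  have hquad : ‖φδ - φs‖ ^ 2 ≤ 2 * ε * ‖φδ - φs‖ + 4 * (δ + ε) * E := by
    have hsum : Complex.re ⟪φs - φδ, φs⟫ ≤ ‖φδ - φs‖ * ε + 2 * (δ + ε) * E := by
      rw [hsplit, Complex.add_re]
      rw [hrev] at hre1
      linarith
    rw [hre, hself] at hsum
    nlinarith [sq_nonneg ‖φδ - φs‖]
  set t := ‖φδ - φs‖ with ht
  set s := Real.sqrt ((δ + ε) * E) with hs
  have hs0 : 0 ≤ s := Real.sqrt_nonneg _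
  have hs2 : s ^ 2 = (δ + ε) * E := by
    rw [hs, Real.sq_sqrt]; positivity
  have ht0 : 0 ≤ t := norm_nonneg _
  nlinarith [sq_nonneg (t - ε - 2 * s), mul_nonneg hs0 ht0, sq_nonneg (t - 2*ε - 2*s)]
end

section
/- Let H and K be complex Hilbert spaces, S : H → K a bounded linear operator, α > 0, δ > 0, ε > 0, and u_δ ∈ K. Suppose φ_δ ∈ H minimizes the Tikhonov functional J_α(φ) = ‖Sφ − u_δ‖² + α‖φ‖² over H and satisfies ‖S φ_δ − u_δ‖ = δ + ε, and suppose φ* ∈ H satisfies ‖S φ* − u_δ‖ ≤ δ + ε. Then ‖φ_δ‖ ≤ ‖φ*‖. (Norm bound for the regularized minimizer under the Morozov discrepancy principle, from the proof of Theorem 3.2(b).) -/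
/-- Norm bound for the regularized minimizer under the Morozov discrepancy principle,
from the proof of Theorem 3.2(b). -/
theorem stmt_2
    {H K : Type*} [NormedAddCommGroup H] [InnerProductSpace ℂ H] [CompleteSpace H]
    [NormedAddCommGroup K] [InnerProductSpace ℂ K] [CompleteSpace K]
    (S : H →L[ℂ] K) (α δ ε : ℝ) (hα : 0 < α) (hδ : 0 < δ) (hε : 0 < ε)
    (uδ : K) (φδ φs : H)
    (hmin : ∀ ψ : H, ‖S φδ - uδ‖ ^ 2 + α * ‖φδ‖ ^ 2 ≤ ‖S ψ - uδ‖ ^ 2 + α * ‖ψ‖ ^ 2)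
    (hdisc : ‖S φδ - uδ‖ = δ + ε)
    (hφs : ‖S φs - uδ‖ ≤ δ + ε) :
    ‖φδ‖ ≤ ‖φs‖ := by
  have h := hmin φs
  have h1 : ‖S φs - uδ‖ ^ 2 ≤ (δ + ε) ^ 2 :=
    pow_le_pow_left₀ (norm_nonneg _) hφs 2
  have h2 : ‖φδ‖ ^ 2 ≤ ‖φs‖ ^ 2 := by nlinarith
  exact (pow_le_pow_iff_left₀ (norm_nonneg _) (norm_nonneg _) two_ne_zero).mp h2
end

section
/- Let H and K be complex Hilbert spaces, S : H → K a bounded linear operator with Hilbert adjoint S*, and let δ > 0, ε > 0, E ≥ 0. Suppose φ*, φ_δ ∈ H and u_δ, h ∈ K satisfy: (i) ‖φ* − S* h‖ ≤ ε; (ii) ‖h‖ ≤ E; (iii) ‖S φ* − u_δ‖ ≤ δ + ε; (iv) ‖S φ_δ − u_δ‖ ≤ δ + ε; (v) ‖φ_δ − φ*‖² ≤ 2 Re⟨φ* − φ_δ, φ*⟩. Then ‖φ_δ − φ*‖² ≤ 2ε ‖φ* − φ_δ‖ + 4(δ + ε)·E. (Main inequality chain from the proof of Theorem 3.2(b).)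 -/
/-- Main inequality chain from the proof of Theorem 3.2(b). -/
theorem stmt_4
    {H K : Type*} [NormedAddCommGroup H] [InnerProductSpace ℂ H] [CompleteSpace H]
    [NormedAddCommGroup K] [InnerProductSpace ℂ K] [CompleteSpace K]
    (S : H →L[ℂ] K) (δ ε E : ℝ) (hδ : 0 < δ) (hε : 0 < ε) (hE : 0 ≤ E)
    (φs φδ : H) (uδ h : K)
    (h1 : ‖φs - (ContinuousLinearMap.adjoint S) h‖ ≤ ε)
    (h2 : ‖h‖ ≤ E)
    (h3 : ‖S φs - uδ‖ ≤ δ + ε)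
    (h4 : ‖S φδ - uδ‖ ≤ δ + ε)
    (h5 : ‖φδ - φs‖ ^ 2 ≤ 2 * (inner ℂ (φs - φδ) φs : ℂ).re) :
    ‖φδ - φs‖ ^ 2 ≤ 2 * ε * ‖φs - φδ‖ + 4 * (δ + ε) * E := by
  have hsplit : (inner ℂ (φs - φδ) φs : ℂ) =
      inner ℂ (φs - φδ) (φs - (ContinuousLinearMap.adjoint S) h)
      + inner ℂ (S (φs - φδ)) h := by
    rw [← ContinuousLinearMap.adjoint_inner_right, ← inner_add_right, sub_add_cancel]
  have t1 : (inner ℂ (φs - φδ) (φs - (ContinuousLinearMap.adjoint S) h) : ℂ).re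
      ≤ ‖φs - φδ‖ * ε := by
    calc (inner ℂ (φs - φδ) (φs - (ContinuousLinearMap.adjoint S) h) : ℂ).re
        ≤ ‖(inner ℂ (φs - φδ) (φs - (ContinuousLinearMap.adjoint S) h) : ℂ)‖ :=
          Complex.re_le_norm _
      _ ≤ ‖φs - φδ‖ * ‖φs - (ContinuousLinearMap.adjoint S) h‖ := norm_inner_le_norm _ _
      _ ≤ ‖φs - φδ‖ * ε := by
          exact mul_le_mul_of_nonneg_left h1 (norm_nonneg _)
  have hS : ‖S (φs - φδ)‖ ≤ 2 * (δ + ε) := by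
    have : S (φs - φδ) = (S φs - uδ) - (S φδ - uδ) := by
      rw [map_sub]; abel
    rw [this]
    calc ‖(S φs - uδ) - (S φδ - uδ)‖ ≤ ‖S φs - uδ‖ + ‖S φδ - uδ‖ := norm_sub_le _ _
      _ ≤ 2 * (δ + ε) := by linarith
  have t2 : (inner ℂ (S (φs - φδ)) h : ℂ).re ≤ 2 * (δ + ε) * E := by
    calc (inner ℂ (S (φs - φδ)) h : ℂ).re ≤ ‖(inner ℂ (S (φs - φδ)) h : ℂ)‖ :=
          Complex.re_le_norm _
      _ ≤ ‖S (φs - φδ)‖ * ‖h‖ := norm_inner_le_norm _ _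
      _ ≤ (2 * (δ + ε)) * E := by
          apply mul_le_mul hS h2 (norm_nonneg _)
          positivity
  rw [hsplit] at h5
  simp only [Complex.add_re] at h5
  nlinarith [h5, t1, t2]
end
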